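/- Let Γ^p = {(x,y) : |x|^p + |y|^p = 1} with 1 < p < 2, parametrized over the positive quadrant by y(x) = (1 − x^p)^{1/p}. Then the minimum of the curvature over the curve equals (p − 1) · 2^{1/p − 1/2}, attained at the point x = y = 2^{−1/p}. -/

import Mathlib

/-- Curvature of the graph `y = (1 - x^p)^{1/p}` (the `ℓ_p` unit circle in the
positive quadrant), `1 < p < 2`. -/
noncomputable def lpCurvature (p x : ℝ) : ℝ :=
  (p - 1) * x ^ (p - 2) * (1 - x ^ p) ^ (1 / p - 2) /
    (1 + x ^ (2 * p - 2) * (1 - x ^ p) ^ (2 / p - 2)) ^ ((3 : ℝ) / 2)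

/-- Power mean inequality: for `0 < θ < 1` and `r ≥ 0`,
`1 + r^θ ≤ 2^(1-θ) (1+r)^θ`. -/
lemma lp_pow_mean (θ r : ℝ) (h0 : 0 < θ) (h1 : θ < 1) (hr : 0 ≤ r) :
    1 + r ^ θ ≤ 2 ^ (1 - θ) * (1 + r) ^ θ := by
  have hc := (Real.strictConcaveOn_rpow h0 h1).concaveOn.2
    (Set.mem_Ici.mpr (zero_le_one (α := ℝ))) (Set.mem_Ici.mpr hr)
    (by norm_num : (0:ℝ) ≤ 1/2) (by norm_num : (0:ℝ) ≤ 1/2) (by norm_num)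
  simp only [smul_eq_mul, Real.one_rpow, mul_one] at hc
  -- hc : 1/2 + 1/2 * r ^ θ ≤ (1/2 + 1/2 * r) ^ θ
  have e1 : ((1:ℝ)/2 + 1/2 * r) = (1 + r)/2 := by ring
  rw [e1, Real.div_rpow (by linarith) (by norm_num)] at hc
  have h2θ : (0:ℝ) < 2 ^ θ := Real.rpow_pos_of_pos two_pos θ
  have e2 : (2:ℝ) ^ (1 - θ) = 2 / 2 ^ θ := by
    rw [Real.rpow_sub two_pos, Real.rpow_one]
  rw [e2]
  rw [div_mul_eq_mul_div, le_div_iff₀ h2θ]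
  calc (1 + r ^ θ) * 2 ^ θ = ((1/2 + 1/2 * r ^ θ) * 2 ^ θ) * 2 := by ring
    _ ≤ ((1 + r) ^ θ / 2 ^ θ * 2 ^ θ) * 2 := by
        have := mul_le_mul_of_nonneg_right hc h2θ.le
        nlinarith [this]
    _ = 2 * (1 + r) ^ θ := by field_simp

/-- Key inequality for curvature minimum. -/
lemma lp_key (p a b : ℝ) (hp1 : 1 < p) (hp2 : p < 2) (ha : 0 < a) (hb : 0 < b)
    (hab : a + b = 1) :
    2 ^ (1/p - 1/2 : ℝ) * (1 + a ^ (2 - 2/p : ℝ) * b ^ (2/p - 2 : ℝ)) ^ ((3:ℝ)/2)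
      ≤ a ^ ((p-2)/p : ℝ) * b ^ (1/p - 2 : ℝ) := by
  have hp0 : 0 < p := by linarith
  set θ : ℝ := 2 - 2/p with hθ
  have hθ0 : 0 < θ := by
    have : 2/p < 2 := by rw [div_lt_iff₀ hp0]; nlinarith
    simp only [hθ]; linarith
  have hθ1 : θ < 1 := by
    have : 1 < 2/p := by rw [lt_div_iff₀ hp0]; linarith
    simp only [hθ]; linarith
  have hB : a ^ θ * b ^ (2/p - 2 : ℝ) = (a/b) ^ θ := by
    rw [Real.div_rpow ha.le hb.le,
      show (2/p - 2 : ℝ) = -θ by simp only [hθ]; ring, Real.rpow_neg hb.le]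
    rw [div_eq_mul_inv]
  have h1b : 1 + a/b = 1/b := by field_simp; linarith
  have h1bθ : ((1:ℝ)/b) ^ θ = b ^ (-θ) := by
    rw [one_div, Real.inv_rpow hb.le, ← Real.rpow_neg hb.le]
  have step1 : 1 + a ^ θ * b ^ (2/p - 2 : ℝ) ≤ 2 ^ (1-θ) * b ^ (-θ) := by
    rw [hB, ← h1bθ, ← h1b]
    exact lp_pow_mean θ (a/b) hθ0 hθ1 (by positivity)
  have rhs_eq : ((2:ℝ) ^ (1-θ) * b ^ (-θ)) ^ ((3:ℝ)/2)
      = 2 ^ ((1-θ)*(3/2)) * b ^ (-θ*(3/2)) := by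
    rw [Real.mul_rpow (by positivity) (by positivity),
      Real.rpow_mul (by norm_num : (0:ℝ) ≤ 2), Real.rpow_mul hb.le]
  have step2 : (1 + a ^ θ * b ^ (2/p - 2 : ℝ)) ^ ((3:ℝ)/2)
      ≤ 2 ^ ((1-θ)*(3/2)) * b ^ (-θ*(3/2)) := by
    rw [← rhs_eq]
    exact Real.rpow_le_rpow (by positivity) step1 (by norm_num)
  have hab4 : a * b ≤ 1/4 := by nlinarith [sq_nonneg (a - b)]
  have hcle : ((p-2)/p : ℝ) ≤ 0 :=
    div_nonpos_of_nonpos_of_nonneg (by linarith) hp0.le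
  have h4 : (2:ℝ) ^ (-2 : ℝ) = 1/4 := by
    rw [Real.rpow_neg (by norm_num : (0:ℝ) ≤ 2), Real.rpow_two]
    norm_num
  have h14 : ((1:ℝ)/4) ^ ((p-2)/p : ℝ) = 2 ^ (4/p - 2 : ℝ) := by
    rw [← h4, ← Real.rpow_mul (by norm_num : (0:ℝ) ≤ 2)]
    congr 1
    field_simp
    ring
  have hgm : (2:ℝ) ^ (4/p - 2 : ℝ) ≤ (a*b) ^ ((p-2)/p : ℝ) := by
    rw [← h14]
    exact Real.rpow_le_rpow_of_nonpos (by positivity) hab4 hcle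
  calc 2 ^ (1/p - 1/2 : ℝ) * (1 + a ^ θ * b ^ (2/p - 2 : ℝ)) ^ ((3:ℝ)/2)
      ≤ 2 ^ (1/p - 1/2 : ℝ) * (2 ^ ((1-θ)*(3/2)) * b ^ (-θ*(3/2))) :=
        mul_le_mul_of_nonneg_left step2 (by positivity)
    _ = 2 ^ (4/p - 2 : ℝ) * b ^ (3/p - 3 : ℝ) := by
        rw [← mul_assoc, ← Real.rpow_add two_pos]
        congr 2
        · simp only [hθ]; ring
        · simp only [hθ]; ring
    _ ≤ (a*b) ^ ((p-2)/p : ℝ) * b ^ (3/p - 3 : ℝ) :=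
        mul_le_mul_of_nonneg_right hgm (Real.rpow_nonneg hb.le _)
    _ = a ^ ((p-2)/p : ℝ) * b ^ (1/p - 2 : ℝ) := by
        rw [Real.mul_rpow ha.le hb.le, mul_assoc, ← Real.rpow_add hb]
        congr 2
        field_simp
        ring

/-- For `1 < p < 2`, the minimum of the curvature of the `ℓ_p` unit circle is
`(p-1) 2^{1/p - 1/2}`, attained at `x = y = 2^{-1/p}`. -/
theorem lp_curvature_min (p : ℝ) (hp1 : 1 < p) (hp2 : p < 2) :
    (∀ x ∈ Set.Ioo (0 : ℝ) 1, (p - 1) * 2 ^ (1 / p - 1 / 2 : ℝ) ≤ lpCurvature p x) ∧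
    lpCurvature p ((2 : ℝ) ^ (-(1 / p) : ℝ)) = (p - 1) * 2 ^ (1 / p - 1 / 2 : ℝ) := by
  have hp0 : 0 < p := by linarith
  constructor
  · rintro x ⟨hx0, hx1⟩
    have ha : 0 < x ^ p := Real.rpow_pos_of_pos hx0 p
    have ha1 : x ^ p < 1 := Real.rpow_lt_one hx0.le hx1 hp0
    have hb : 0 < 1 - x ^ p := by linarith
    have e1 : x ^ (p - 2 : ℝ) = (x ^ p) ^ ((p-2)/p : ℝ) := by
      rw [← Real.rpow_mul hx0.le]
      congr 1
      field_simp
    have e2 : x ^ (2*p - 2 : ℝ) = (x ^ p) ^ (2 - 2/p : ℝ) := by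
      rw [← Real.rpow_mul hx0.le]
      congr 1
      field_simp
      try ring
    rw [lpCurvature, e1, e2, le_div_iff₀ (by positivity)]
    have hk := lp_key p (x^p) (1 - x^p) hp1 hp2 ha hb (by ring)
    calc (p - 1) * 2 ^ (1/p - 1/2 : ℝ)
          * (1 + (x^p) ^ (2 - 2/p : ℝ) * (1 - x^p) ^ (2/p - 2 : ℝ)) ^ ((3:ℝ)/2)
        = (p - 1) * (2 ^ (1/p - 1/2 : ℝ)
          * (1 + (x^p) ^ (2 - 2/p : ℝ) * (1 - x^p) ^ (2/p - 2 : ℝ)) ^ ((3:ℝ)/2)) := by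
          ring
      _ ≤ (p - 1) * ((x^p) ^ ((p-2)/p : ℝ) * (1 - x^p) ^ (1/p - 2 : ℝ)) :=
          mul_le_mul_of_nonneg_left hk (by linarith)
      _ = (p - 1) * (x^p) ^ ((p-2)/p : ℝ) * (1 - x^p) ^ (1/p - 2 : ℝ) := by ring
  · set x : ℝ := (2:ℝ) ^ (-(1/p) : ℝ) with hxdef
    have h2 : (0:ℝ) < 2 := two_pos
    have hxp : x ^ p = 1/2 := by
      rw [hxdef, ← Real.rpow_mul h2.le,
        show (-(1/p) * p : ℝ) = -1 by field_simp,
        Real.rpow_neg_one]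
      norm_num
    have hx0 : 0 < x := Real.rpow_pos_of_pos h2 _
    have e1 : x ^ (p - 2 : ℝ) = 2 ^ ((2-p)/p : ℝ) := by
      rw [hxdef, ← Real.rpow_mul h2.le]
      congr 1
      field_simp
      try ring
    have e2 : x ^ (2*p - 2 : ℝ) = 2 ^ ((2-2*p)/p : ℝ) := by
      rw [hxdef, ← Real.rpow_mul h2.le]
      congr 1
      field_simp
      try ring
    have e3 : ((1:ℝ)/2) ^ (1/p - 2 : ℝ) = 2 ^ (2 - 1/p : ℝ) := by
      rw [one_div, ← Real.rpow_neg_one 2, ← Real.rpow_mul h2.le]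
      congr 1
      ring
    have e4 : ((1:ℝ)/2) ^ (2/p - 2 : ℝ) = 2 ^ (2 - 2/p : ℝ) := by
      rw [one_div, ← Real.rpow_neg_one 2, ← Real.rpow_mul h2.le]
      congr 1
      ring
    rw [lpCurvature, hxp, show (1:ℝ) - 1/2 = 1/2 from by norm_num, e1, e2, e3, e4,
      mul_assoc (p-1), ← Real.rpow_add h2, ← Real.rpow_add h2,
      show ((2-2*p)/p + (2 - 2/p) : ℝ) = 0 from by field_simp; ring,
      Real.rpow_zero, show (1:ℝ) + 1 = 2 from by norm_num,
      mul_div_assoc, ← Real.rpow_sub h2]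
    congr 1
    field_simp
    ring
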